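/- Let κ be a Markov kernel on a measurable space E, ψ a probability measure on E, and ε ∈ (0, 1], such that κ(x, A) ≥ ε · ψ(A) for every x ∈ E and every measurable A, and let π be an invariant probability measure for κ. Then for every probability measure μ on E and every n ≥ 0, ‖μκⁿ − π‖_TV ≤ (1 − ε)ⁿ · ‖μ − π‖_TV, where μκⁿ denotes n successive applications of the kernel to μ. In particular, for every x ∈ E the n-step law Kⁿ(x, ·) started from the Dirac measure at x converges to π in total variation as n → ∞. -/

import Mathlib

open MeasureTheory ProbabilityTheory Filter

/-- The total variation distance `‖μ − ν‖_TV = |μ − ν|(E)` between two (finite) measures,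
expressed via the Jordan decomposition of `μ − ν`: the measure-theoretic truncated
differences `μ - ν` and `ν - μ` are exactly the positive and negative parts of the
signed measure `μ − ν`, so `|μ − ν|(E) = (μ - ν)(E) + (ν - μ)(E)`. -/
noncomputable def tvDist {E : Type*} [MeasurableSpace E] (μ ν : Measure E) : ENNReal :=
  (μ - ν) Set.univ + (ν - μ) Set.univ

/-- `kernelIterate κ μ n = μκⁿ`, the result of `n` successive applications of the
kernel `κ` to the measure `μ`, where one application is the pushforward
`μκ(A) = ∫ κ(x, A) dμ(x)`, i.e. `μ.bind κ`. -/
noncomputable def kernelIterate {E : Type*} [MeasurableSpace E]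
    (κ : Kernel E E) (μ : Measure E) : ℕ → Measure E
  | 0 => μ
  | n + 1 => (kernelIterate κ μ n).bind κ

section Aux

variable {E : Type*} [MeasurableSpace E]

/-- On a Hahn-type set, `(μ - ν)(univ) = μ s - ν s`. -/
lemma doeblin_sub_univ_eq {μ ν : Measure E} [IsFiniteMeasure μ] [IsFiniteMeasure ν]
    {s : Set E} (hs : MeasurableSet s)
    (h1 : ν.restrict s ≤ μ.restrict s) (h2 : μ.restrict sᶜ ≤ ν.restrict sᶜ) :
    (μ - ν) Set.univ = μ s - ν s := by
  have hc : (μ - ν) sᶜ = 0 :=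
    Measure.sub_apply_eq_zero_of_restrict_le_restrict h2 hs.compl
  have hsplit : (μ - ν) s + (μ - ν) sᶜ = (μ - ν) Set.univ :=
    measure_add_measure_compl hs
  have hrs : (μ - ν) s = μ s - ν s := by
    calc (μ - ν) s = (μ - ν).restrict s Set.univ := by
          rw [Measure.restrict_apply_univ]
      _ = (μ.restrict s - ν.restrict s) Set.univ := by
          rw [Measure.restrict_sub_eq_restrict_sub_restrict hs]
      _ = μ.restrict s Set.univ - ν.restrict s Set.univ :=
          Measure.sub_apply MeasurableSet.univ h1
      _ = μ s - ν s := by rw [Measure.restrict_apply_univ, Measure.restrict_apply_univ]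
  rw [← hsplit, hc, add_zero, hrs]

/-- For probability measures, the two Jordan masses agree. -/
lemma doeblin_delta_symm {μ ν : Measure E} [IsProbabilityMeasure μ] [IsProbabilityMeasure ν]
    {s : Set E} (hs : MeasurableSet s)
    (hνs : ν s ≤ μ s) (hμc : μ sᶜ ≤ ν sᶜ) :
    ν sᶜ - μ sᶜ = μ s - ν s := by
  have hμ1 : μ s + μ sᶜ = 1 := by
    rw [measure_add_measure_compl hs, measure_univ]
  have hν1 : ν s + ν sᶜ = 1 := by
    rw [measure_add_measure_compl hs, measure_univ]
  refine ENNReal.sub_eq_of_eq_add (measure_ne_top μ sᶜ) ?_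
  have key : ν sᶜ + ν s = (μ s - ν s + μ sᶜ) + ν s := by
    rw [add_right_comm, tsub_add_cancel_of_le hνs, hμ1, ← hν1, add_comm]
  exact (ENNReal.add_left_inj (measure_ne_top ν s)).1 key

/-- Key one-step bound for one Jordan part. -/
lemma doeblin_bind_sub_univ_le (κ : Kernel E E) [IsMarkovKernel κ]
    (ψ : Measure E) [IsProbabilityMeasure ψ] (ε : NNReal)
    (hmin : ∀ (x : E) (A : Set E), MeasurableSet A → (ε : ENNReal) * ψ A ≤ κ x A)
    (μ ν : Measure E) [IsFiniteMeasure μ] [IsFiniteMeasure ν]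
    {s : Set E} (hs : MeasurableSet s)
    (h1 : ν.restrict s ≤ μ.restrict s) (h2 : μ.restrict sᶜ ≤ ν.restrict sᶜ)
    (hQ : (ν.restrict sᶜ - μ.restrict sᶜ) Set.univ = μ s - ν s) :
    (μ.bind κ - ν.bind κ) Set.univ ≤ (μ s - ν s) - (ε : ENNReal) * (μ s - ν s) := by
  set δ : ENNReal := μ s - ν s with hδdef
  have hδtop : δ ≠ ⊤ := (tsub_le_self.trans_lt (measure_lt_top μ s)).ne
  set P : Measure E := μ.restrict s - ν.restrict s with hP
  set Q : Measure E := ν.restrict sᶜ - μ.restrict sᶜ with hQdef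
  set c : Measure E := ν.restrict s + μ.restrict sᶜ with hc
  have hPuniv : P Set.univ = δ := by
    rw [hP, Measure.sub_apply MeasurableSet.univ h1, Measure.restrict_apply_univ,
      Measure.restrict_apply_univ]
  have hμdec : μ = c + P := by
    calc μ = μ.restrict s + μ.restrict sᶜ := (Measure.restrict_add_restrict_compl hs).symm
      _ = (P + ν.restrict s) + μ.restrict sᶜ := by
          rw [hP, Measure.sub_add_cancel_of_le h1]
      _ = c + P := by rw [hc]; abel
  have hνdec : ν = c + Q := by
    calc ν = ν.restrict s + ν.restrict sᶜ := (Measure.restrict_add_restrict_compl hs).symm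
      _ = ν.restrict s + (Q + μ.restrict sᶜ) := by
          rw [hQdef, Measure.sub_add_cancel_of_le h2]
      _ = c + Q := by rw [hc]; abel
  clear_value P Q c
  set η : Measure E := ((ε : ENNReal) * δ) • ψ with hη
  have hηuniv : η Set.univ = (ε : ENNReal) * δ := by
    rw [hη, Measure.smul_apply, smul_eq_mul, measure_univ, mul_one]
  have hηfin : IsFiniteMeasure η := by
    refine ⟨?_⟩
    rw [hηuniv]
    exact ENNReal.mul_lt_top ENNReal.coe_lt_top hδtop.lt_top
  have hηle : ∀ R : Measure E, R Set.univ = δ → η ≤ R.bind κ := by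
    intro R hR
    refine Measure.le_iff.2 fun A hA => ?_
    rw [Measure.bind_apply hA κ.measurable.aemeasurable]
    calc η A = (ε : ENNReal) * δ * ψ A := by
          rw [hη, Measure.smul_apply, smul_eq_mul]
      _ = ((ε : ENNReal) * ψ A) * R Set.univ := by rw [hR]; ring
      _ = ∫⁻ _, (ε : ENNReal) * ψ A ∂ R := (lintegral_const _).symm
      _ ≤ ∫⁻ x, κ x A ∂ R := lintegral_mono fun x => hmin x A hA
  have hηP : η ≤ P.bind κ := hηle P hPuniv
  have hηQ : η ≤ Q.bind κ := hηle Q hQ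
  clear_value η
  have hbind : μ.bind κ ≤ (P.bind κ - η) + ν.bind κ := by
    calc μ.bind κ = c.bind κ + P.bind κ := by rw [hμdec, Measure.comp_add]
      _ = c.bind κ + ((P.bind κ - η) + η) := by rw [Measure.sub_add_cancel_of_le hηP]
      _ = (P.bind κ - η) + (c.bind κ + η) := by
          rw [← add_assoc, add_comm (c.bind (κ : Kernel E E)), add_assoc]
      _ ≤ (P.bind κ - η) + (c.bind κ + Q.bind κ) :=
          add_le_add le_rfl (add_le_add le_rfl hηQ)
      _ = (P.bind κ - η) + ν.bind κ := by rw [← Measure.comp_add, ← hνdec]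
  have hsub : μ.bind κ - ν.bind κ ≤ P.bind κ - η := Measure.sub_le_of_le_add hbind
  have hPbind : (P.bind κ) Set.univ = δ := by
    rw [Measure.bind_apply MeasurableSet.univ κ.measurable.aemeasurable]
    simp [hPuniv]
  calc (μ.bind κ - ν.bind κ) Set.univ ≤ (P.bind κ - η) Set.univ :=
        Measure.le_iff'.1 hsub Set.univ
    _ = (P.bind κ) Set.univ - η Set.univ := Measure.sub_apply MeasurableSet.univ hηP
    _ = δ - (ε : ENNReal) * δ := by rw [hPbind, hηuniv]

/-- One-step TV contraction under Doeblin minorization. -/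
lemma doeblin_contract (κ : Kernel E E) [IsMarkovKernel κ]
    (ψ : Measure E) [IsProbabilityMeasure ψ] (ε : NNReal)
    (hmin : ∀ (x : E) (A : Set E), MeasurableSet A → (ε : ENNReal) * ψ A ≤ κ x A)
    (μ ν : Measure E) [IsProbabilityMeasure μ] [IsProbabilityMeasure ν] :
    tvDist (μ.bind κ) (ν.bind κ) ≤ ((1 - ε : NNReal) : ENNReal) * tvDist μ ν := by
  obtain ⟨s, hs, hss, hsc⟩ := hahn_decomposition (μ := μ) (ν := ν)
  have h1 : ν.restrict s ≤ μ.restrict s := by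
    refine Measure.le_iff.2 fun t ht => ?_
    rw [Measure.restrict_apply ht, Measure.restrict_apply ht]
    exact hss _ (ht.inter hs) Set.inter_subset_right
  have h2 : μ.restrict sᶜ ≤ ν.restrict sᶜ := by
    refine Measure.le_iff.2 fun t ht => ?_
    rw [Measure.restrict_apply ht, Measure.restrict_apply ht]
    exact hsc _ (ht.inter hs.compl) Set.inter_subset_right
  have hνs : ν s ≤ μ s := hss s hs subset_rfl
  have hμc : μ sᶜ ≤ ν sᶜ := hsc sᶜ hs.compl subset_rfl
  set δ : ENNReal := μ s - ν s with hδdef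
  have hδtop : δ ≠ ⊤ := (tsub_le_self.trans_lt (measure_lt_top μ s)).ne
  have hδsymm : ν sᶜ - μ sᶜ = δ := doeblin_delta_symm hs hνs hμc
  have htv : tvDist μ ν = δ + δ := by
    have e1 : (μ - ν) Set.univ = δ := doeblin_sub_univ_eq hs h1 h2
    have e2 : (ν - μ) Set.univ = δ := by
      have h1' : μ.restrict sᶜ ≤ ν.restrict sᶜ := h2
      have h2' : ν.restrict sᶜᶜ ≤ μ.restrict sᶜᶜ := by rw [compl_compl]; exact h1
      rw [doeblin_sub_univ_eq hs.compl h1' h2', hδsymm]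
    rw [tvDist, e1, e2]
  have hQ1 : (ν.restrict sᶜ - μ.restrict sᶜ) Set.univ = μ s - ν s := by
    rw [Measure.sub_apply MeasurableSet.univ h2, Measure.restrict_apply_univ,
      Measure.restrict_apply_univ, hδsymm]
  have bound1 := doeblin_bind_sub_univ_le κ ψ ε hmin μ ν hs h1 h2 hQ1
  have h2' : ν.restrict sᶜᶜ ≤ μ.restrict sᶜᶜ := by rw [compl_compl]; exact h1
  have hQ2 : (μ.restrict sᶜᶜ - ν.restrict sᶜᶜ) Set.univ = ν sᶜ - μ sᶜ := by
    rw [compl_compl, Measure.sub_apply MeasurableSet.univ h1, Measure.restrict_apply_univ,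
      Measure.restrict_apply_univ, hδsymm]
  have bound2 := doeblin_bind_sub_univ_le κ ψ ε hmin ν μ hs.compl h2 h2' hQ2
  rw [hδsymm] at bound2
  have hmul : ((1 - ε : NNReal) : ENNReal) * δ = δ - (ε : ENNReal) * δ := by
    rw [ENNReal.coe_sub, ENNReal.sub_mul fun _ _ => hδtop, ENNReal.coe_one, one_mul]
  calc tvDist (μ.bind κ) (ν.bind κ)
      ≤ (δ - (ε : ENNReal) * δ) + (δ - (ε : ENNReal) * δ) := add_le_add bound1 bound2
    _ = ((1 - ε : NNReal) : ENNReal) * δ + ((1 - ε : NNReal) : ENNReal) * δ := by rw [hmul]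
    _ = ((1 - ε : NNReal) : ENNReal) * (δ + δ) := (mul_add _ _ _).symm
    _ = ((1 - ε : NNReal) : ENNReal) * tvDist μ ν := by rw [htv]

end Aux

/-- **Geometric ergodicity under Doeblin minorization.** If a Markov kernel `κ` satisfies
`κ(x, A) ≥ ε · ψ(A)` for a probability measure `ψ` and `ε ∈ (0, 1]`, and `π` is an
invariant probability measure for `κ`, then for every probability measure `μ` and every
`n ≥ 0`, `‖μκⁿ − π‖_TV ≤ (1 − ε)ⁿ · ‖μ − π‖_TV`. In particular, for every `x ∈ E` the
`n`-step law `Kⁿ(x, ·)` started from the Dirac measure at `x` converges to `π` in total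
variation as `n → ∞`. -/
theorem doeblin_geometric_ergodicity
    {E : Type*} [MeasurableSpace E]
    (κ : Kernel E E) [IsMarkovKernel κ]
    (ψ : Measure E) [IsProbabilityMeasure ψ]
    (ε : NNReal) (hε0 : 0 < ε) (hε1 : ε ≤ 1)
    (hmin : ∀ (x : E) (A : Set E), MeasurableSet A → (ε : ENNReal) * ψ A ≤ κ x A)
    (π : Measure E) [IsProbabilityMeasure π]
    (hπ : ∀ A : Set E, MeasurableSet A → π A = ∫⁻ x, κ x A ∂π) :
    (∀ (μ : Measure E), IsProbabilityMeasure μ → ∀ n : ℕ,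
        tvDist (kernelIterate κ μ n) π
          ≤ ((1 - ε : NNReal) : ENNReal) ^ n * tvDist μ π) ∧
      ∀ x : E, Tendsto (fun n : ℕ => tvDist (kernelIterate κ (Measure.dirac x) n) π)
        atTop (nhds 0) := by
  have hfix : π.bind κ = π := by
    ext A hA
    rw [Measure.bind_apply hA κ.measurable.aemeasurable]
    exact (hπ A hA).symm
  have hiter : ∀ (μ : Measure E), IsProbabilityMeasure μ →
      ∀ n, IsProbabilityMeasure (kernelIterate κ μ n) := by
    intro μ hμ n
    induction n with
    | zero => exact hμ
    | succ n ih =>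
      refine ⟨?_⟩
      show ((kernelIterate κ μ n).bind κ) Set.univ = 1
      rw [Measure.bind_apply MeasurableSet.univ κ.measurable.aemeasurable]
      simp [ih.measure_univ]
  have main : ∀ (μ : Measure E), IsProbabilityMeasure μ → ∀ n : ℕ,
      tvDist (kernelIterate κ μ n) π
        ≤ ((1 - ε : NNReal) : ENNReal) ^ n * tvDist μ π := by
    intro μ hμ n
    induction n with
    | zero => simp [kernelIterate]
    | succ n ih =>
      haveI := hiter μ hμ n
      calc tvDist (kernelIterate κ μ (n + 1)) π
          = tvDist ((kernelIterate κ μ n).bind κ) (π.bind κ) := by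
            rw [hfix]; rfl
        _ ≤ ((1 - ε : NNReal) : ENNReal) * tvDist (kernelIterate κ μ n) π :=
            doeblin_contract κ ψ ε hmin _ π
        _ ≤ ((1 - ε : NNReal) : ENNReal) *
              (((1 - ε : NNReal) : ENNReal) ^ n * tvDist μ π) := mul_le_mul_right ih _
        _ = ((1 - ε : NNReal) : ENNReal) ^ (n + 1) * tvDist μ π := by ring
  refine ⟨main, fun x => ?_⟩
  have htv2 : ∀ (μ ν : Measure E), IsProbabilityMeasure μ → IsProbabilityMeasure ν →
      tvDist μ ν ≤ 2 := by
    intro μ ν hμ hν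
    have a : (μ - ν) Set.univ ≤ 1 := by
      calc (μ - ν) Set.univ ≤ μ Set.univ := Measure.le_iff'.1 Measure.sub_le Set.univ
        _ = 1 := measure_univ
    have b : (ν - μ) Set.univ ≤ 1 := by
      calc (ν - μ) Set.univ ≤ ν Set.univ := Measure.le_iff'.1 Measure.sub_le Set.univ
        _ = 1 := measure_univ
    calc tvDist μ ν ≤ 1 + 1 := add_le_add a b
      _ = 2 := one_add_one_eq_two
  have hb : ∀ n : ℕ, tvDist (kernelIterate κ (Measure.dirac x) n) π
      ≤ ((1 - ε : NNReal) : ENNReal) ^ n * 2 := by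
    intro n
    haveI := hiter (Measure.dirac x) inferInstance n
    exact (main _ inferInstance n).trans
      (mul_le_mul_right (htv2 _ _ inferInstance inferInstance) _)
  have hr : ((1 - ε : NNReal) : ENNReal) < 1 := by
    rw [← ENNReal.coe_one, ENNReal.coe_lt_coe]
    exact tsub_lt_self one_pos hε0
  have ht : Tendsto (fun n : ℕ => ((1 - ε : NNReal) : ENNReal) ^ n * 2) atTop (nhds 0) := by
    have := ENNReal.Tendsto.mul_const
      (ENNReal.tendsto_pow_atTop_nhds_zero_of_lt_one hr)
      (Or.inr (by norm_num : (2 : ENNReal) ≠ ⊤))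
    simpa using this
  exact tendsto_of_tendsto_of_tendsto_of_le_of_le tendsto_const_nhds ht
    (fun n => zero_le) hb
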